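/- arXiv:2304.11288 — 6 statements merged into one kernel-verified Lean document; each statement's English description precedes it below -/
import Mathlib

section
/- Discrete energy identity for Step I of the EOP-SAV/Crank–Nicolson scheme: Assume Δt > 0, elements φⁿ, φⁿ⁺¹, μ, w of H, real numbers Rⁿ, R̃ⁿ⁺¹, and a real number ℰ₁ > 0 satisfy the scheme equations (i) (φⁿ⁺¹ − φⁿ)/Δt = −G μ, (ii) μ = (1/2)·L φⁿ⁺¹ + (1/2)·L φⁿ + ((R̃ⁿ⁺¹ + Rⁿ)/(2·√ℰ₁))·w, (iii) (R̃ⁿ⁺¹ − Rⁿ)/Δt = (1/(2·√ℰ₁))·⟨w, (φⁿ⁺¹ − φⁿ)/Δt⟩. Then (1/2)⟨L φⁿ⁺¹, φⁿ⁺¹⟩ + (R̃ⁿ⁺¹)² − (1/2)⟨L φⁿ, φⁿ⟩ − (Rⁿ)² = −Δt·⟨G μ, μ⟩ ≤ 0. -/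
open RealInnerProductSpace

/-- Discrete energy identity for Step I of the EOP-SAV/Crank–Nicolson scheme. -/
theorem eop_sav_cn_stepI_energy_identity
    {H : Type*} [NormedAddCommGroup H] [InnerProductSpace ℝ H]
    (L G : H →L[ℝ] H)
    (hLsym : ∀ u v : H, ⟪L u, v⟫ = ⟪u, L v⟫)
    (hLpos : ∀ v : H, 0 ≤ ⟪L v, v⟫)
    (hGpos : ∀ v : H, 0 ≤ ⟪G v, v⟫)
    (dt : ℝ) (hdt : 0 < dt)
    (φn φn1 μ w : H) (Rn Rt E1 : ℝ) (hE1 : 0 < E1)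
    (h1 : dt⁻¹ • (φn1 - φn) = -(G μ))
    (h2 : μ = (1/2 : ℝ) • L φn1 + (1/2 : ℝ) • L φn
          + ((Rt + Rn) / (2 * Real.sqrt E1)) • w)
    (h3 : (Rt - Rn) / dt = (1 / (2 * Real.sqrt E1)) * ⟪w, dt⁻¹ • (φn1 - φn)⟫) :
    (1/2) * ⟪L φn1, φn1⟫ + Rt ^ 2 - (1/2) * ⟪L φn, φn⟫ - Rn ^ 2
      = -dt * ⟪G μ, μ⟫ ∧ -dt * ⟪G μ, μ⟫ ≤ 0 := by
  have hd : φn1 - φn = (-dt) • G μ := by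
    have h := congrArg (fun x => dt • x) h1
    simp only [smul_smul, mul_inv_cancel₀ hdt.ne', one_smul] at h
    rw [h]; simp [neg_smul]
  have hR' : Rt - Rn = (1 / (2 * Real.sqrt E1)) * ⟪w, φn1 - φn⟫ := by
    have h := congrArg (fun x => dt * x) h3
    rw [mul_div_cancel₀ _ hdt.ne'] at h
    rw [h, real_inner_smul_right]
    field_simp
  have key : ⟪μ, φn1 - φn⟫ = -dt * ⟪G μ, μ⟫ := by
    rw [hd, real_inner_smul_right, real_inner_comm]
  have expand : ⟪μ, φn1 - φn⟫
      = (1/2) * ⟪L φn1, φn1⟫ - (1/2) * ⟪L φn, φn⟫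
        + (1/2) * (⟪L φn, φn1⟫ - ⟪L φn1, φn⟫)
        + ((Rt + Rn) / (2 * Real.sqrt E1)) * ⟪w, φn1 - φn⟫ := by
    rw [h2]
    simp only [inner_add_left, real_inner_smul_left, inner_sub_right]
    ring
  have hsym : ⟪L φn, φn1⟫ = ⟪L φn1, φn⟫ := by
    rw [hLsym, real_inner_comm]
  have hRsq : Rt ^ 2 - Rn ^ 2 = ((Rt + Rn) / (2 * Real.sqrt E1)) * ⟪w, φn1 - φn⟫ := by
    have : Rt ^ 2 - Rn ^ 2 = (Rt + Rn) * (Rt - Rn) := by ring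
    rw [this, hR']; ring
  constructor
  · rw [hsym] at expand
    have := expand.symm.trans key
    linarith [this, hRsq]
  · have := hGpos μ
    nlinarith [hdt.le]
end

section
/- Well-definedness of the quantity sⁿ⁺¹ in the EOP-SAV/CN scheme: Under the same scheme equations (i) (φⁿ⁺¹ − φⁿ)/Δt = −G μ, (ii) μ = (1/2)·L φⁿ⁺¹ + (1/2)·L φⁿ + ((R̃ⁿ⁺¹ + Rⁿ)/(2·√ℰ₁))·w, (iii) (R̃ⁿ⁺¹ − Rⁿ)/Δt = (1/(2·√ℰ₁))·⟨w, (φⁿ⁺¹ − φⁿ)/Δt⟩ with Δt > 0 and ℰ₁ > 0, the radicand defining sⁿ⁺¹ satisfies (1/2)⟨L φⁿ, φⁿ⟩ − (1/2)⟨L φⁿ⁺¹, φⁿ⁺¹⟩ + (Rⁿ)² = (R̃ⁿ⁺¹)² + Δt·⟨G μ, μ⟩ ≥ 0; in particular it is non-negative and |R̃ⁿ⁺¹| ≤ √((1/2)⟨L φⁿ, φⁿ⟩ − (1/2)⟨L φⁿ⁺¹, φⁿ⁺¹⟩ + (Rⁿ)²). -/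
open RealInnerProductSpace

/-- Well-definedness of the quantity `sⁿ⁺¹` in the EOP-SAV/CN scheme:
the radicand is non-negative and bounds `|R̃ⁿ⁺¹|`. -/
theorem eop_sav_cn_radicand_nonneg
    {H : Type*} [NormedAddCommGroup H] [InnerProductSpace ℝ H]
    (L G : H →L[ℝ] H)
    (hLsym : ∀ u v : H, ⟪L u, v⟫ = ⟪u, L v⟫)
    (hLpos : ∀ v : H, 0 ≤ ⟪L v, v⟫)
    (hGpos : ∀ v : H, 0 ≤ ⟪G v, v⟫)
    (dt : ℝ) (hdt : 0 < dt)
    (φn φn1 μ w : H) (Rn Rt E1 : ℝ) (hE1 : 0 < E1)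
    (h1 : dt⁻¹ • (φn1 - φn) = -(G μ))
    (h2 : μ = (1/2 : ℝ) • L φn1 + (1/2 : ℝ) • L φn
          + ((Rt + Rn) / (2 * Real.sqrt E1)) • w)
    (h3 : (Rt - Rn) / dt = (1 / (2 * Real.sqrt E1)) * ⟪w, dt⁻¹ • (φn1 - φn)⟫) :
    (1/2) * ⟪L φn, φn⟫ - (1/2) * ⟪L φn1, φn1⟫ + Rn ^ 2
        = Rt ^ 2 + dt * ⟪G μ, μ⟫ ∧
    0 ≤ (1/2) * ⟪L φn, φn⟫ - (1/2) * ⟪L φn1, φn1⟫ + Rn ^ 2 ∧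
    |Rt| ≤ Real.sqrt ((1/2) * ⟪L φn, φn⟫ - (1/2) * ⟪L φn1, φn1⟫ + Rn ^ 2) := by
  have hdt0 : dt ≠ 0 := ne_of_gt hdt
  have hs : (0:ℝ) < Real.sqrt E1 := Real.sqrt_pos.mpr hE1
  have hφ : φn1 - φn = dt • (-(G μ)) := by
    rw [← h1, smul_smul, mul_inv_cancel₀ hdt0, one_smul]
  -- inner product of w with φn1 - φn
  have hw : ⟪w, φn1 - φn⟫ = 2 * Real.sqrt E1 * (Rt - Rn) := by
    rw [real_inner_smul_right] at h3
    field_simp at h3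
    apply mul_right_cancel₀ hdt0
    linear_combination (-dt) * h3
  -- A: via h1
  have hA : ⟪μ, φn1 - φn⟫ = -(dt * ⟪G μ, μ⟫) := by
    rw [hφ, real_inner_smul_right, inner_neg_right, real_inner_comm]
    ring
  -- B: via h2
  have hB : ⟪μ, φn1 - φn⟫
      = (1/2) * ⟪L φn1, φn1⟫ - (1/2) * ⟪L φn, φn⟫ + (Rt ^ 2 - Rn ^ 2) := by
    have hcross : ⟪L φn1, φn⟫ = ⟪L φn, φn1⟫ := by
      rw [hLsym, real_inner_comm]
    rw [h2]
    rw [inner_add_left, inner_add_left, real_inner_smul_left, real_inner_smul_left,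
      real_inner_smul_left, inner_sub_right, inner_sub_right, hw, hcross]
    field_simp
    ring
  have hkey : (1/2) * ⟪L φn, φn⟫ - (1/2) * ⟪L φn1, φn1⟫ + Rn ^ 2
      = Rt ^ 2 + dt * ⟪G μ, μ⟫ := by linarith [hA.symm.trans hB]
  have hG : 0 ≤ dt * ⟪G μ, μ⟫ := mul_nonneg hdt.le (hGpos μ)
  have hnn : 0 ≤ (1/2) * ⟪L φn, φn⟫ - (1/2) * ⟪L φn1, φn1⟫ + Rn ^ 2 := by
    rw [hkey]; positivity
  refine ⟨hkey, hnn, ?_⟩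
  rw [← Real.sqrt_sq_eq_abs]
  exact Real.sqrt_le_sqrt (by nlinarith)
end

section
/- Unconditional energy stability of the EOP-SAV/CN scheme (Theorem 3.2, modified energy): Assume Δt > 0, elements φⁿ, φⁿ⁺¹, μ, w of H, reals Rⁿ, R̃ⁿ⁺¹, ℰ₁ > 0 and ℰ₁′ > 0 satisfy (i) (φⁿ⁺¹ − φⁿ)/Δt = −G μ, (ii) μ = (1/2)·L φⁿ⁺¹ + (1/2)·L φⁿ + ((R̃ⁿ⁺¹ + Rⁿ)/(2·√ℰ₁))·w, (iii) (R̃ⁿ⁺¹ − Rⁿ)/Δt = (1/(2·√ℰ₁))·⟨w, (φⁿ⁺¹ − φⁿ)/Δt⟩. Define s := √((1/2)⟨L φⁿ, φⁿ⟩ − (1/2)⟨L φⁿ⁺¹, φⁿ⁺¹⟩ + (Rⁿ)²) and Rⁿ⁺¹ := min{s, √ℰ₁′}. Then (a) (1/2)⟨L φⁿ⁺¹, φⁿ⁺¹⟩ + (Rⁿ⁺¹)² ≤ (1/2)⟨L φⁿ, φⁿ⟩ + (Rⁿ)², i.e. the modified energy is non-increasing; and (b) (Rⁿ⁺¹)²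 ≤ ℰ₁′, i.e. the modified energy is bounded above by the original energy. -/
open RealInnerProductSpace

/-- Unconditional energy stability of the EOP-SAV/CN scheme
(Theorem 3.2, modified energy part). -/
theorem eop_sav_cn_unconditional_stability
    {H : Type*} [NormedAddCommGroup H] [InnerProductSpace ℝ H]
    (L G : H →L[ℝ] H)
    (hLsym : ∀ u v : H, ⟪L u, v⟫ = ⟪u, L v⟫)
    (hLpos : ∀ v : H, 0 ≤ ⟪L v, v⟫)
    (hGpos : ∀ v : H, 0 ≤ ⟪G v, v⟫)
    (dt : ℝ) (hdt : 0 < dt)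
    (φn φn1 μ w : H) (Rn Rt E1 E1' : ℝ) (hE1 : 0 < E1) (hE1' : 0 < E1')
    (h1 : dt⁻¹ • (φn1 - φn) = -(G μ))
    (h2 : μ = (1/2 : ℝ) • L φn1 + (1/2 : ℝ) • L φn
          + ((Rt + Rn) / (2 * Real.sqrt E1)) • w)
    (h3 : (Rt - Rn) / dt = (1 / (2 * Real.sqrt E1)) * ⟪w, dt⁻¹ • (φn1 - φn)⟫) :
    (1/2) * ⟪L φn1, φn1⟫
        + (min (Real.sqrt ((1/2) * ⟪L φn, φn⟫ - (1/2) * ⟪L φn1, φn1⟫ + Rn ^ 2))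
            (Real.sqrt E1')) ^ 2
      ≤ (1/2) * ⟪L φn, φn⟫ + Rn ^ 2 ∧
    (min (Real.sqrt ((1/2) * ⟪L φn, φn⟫ - (1/2) * ⟪L φn1, φn1⟫ + Rn ^ 2))
        (Real.sqrt E1')) ^ 2 ≤ E1' := by
  have hsE : (0:ℝ) < Real.sqrt E1 := Real.sqrt_pos.mpr hE1
  set d := φn1 - φn with hd
  have hdeq : d = dt • (-(G μ)) := by
    rw [← h1, smul_smul, mul_inv_cancel₀ hdt.ne', one_smul]
  have hμd : ⟪μ, d⟫ = -(dt * ⟪G μ, μ⟫) := by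
    rw [hdeq, real_inner_smul_right, inner_neg_right, real_inner_comm]; ring
  have hμd_le : ⟪μ, d⟫ ≤ 0 := by
    rw [hμd]
    nlinarith [hGpos μ]
  have hwd : ⟪w, d⟫ = 2 * Real.sqrt E1 * (Rt - Rn) := by
    rw [real_inner_smul_right] at h3
    field_simp at h3
    exact mul_right_cancel₀ hdt.ne' (by linear_combination (-dt) * h3)
  have hLd : ⟪L φn1, d⟫ + ⟪L φn, d⟫ = ⟪L φn1, φn1⟫ - ⟪L φn, φn⟫ := by
    rw [hd, inner_sub_right, inner_sub_right, hLsym φn1 φn, real_inner_comm φn1 (L φn)]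
    ring
  have hμd2 : ⟪μ, d⟫ = (1/2) * (⟪L φn1, φn1⟫ - ⟪L φn, φn⟫) + (Rt^2 - Rn^2) := by
    rw [h2, inner_add_left, inner_add_left, real_inner_smul_left, real_inner_smul_left,
      real_inner_smul_left, hwd]
    have : (Rt + Rn) / (2 * Real.sqrt E1) * (2 * Real.sqrt E1 * (Rt - Rn))
        = Rt ^ 2 - Rn ^ 2 := by
      field_simp
      ring
    rw [this]
    linarith [hLd]
  have key : (1/2) * ⟪L φn1, φn1⟫ + Rt^2 ≤ (1/2) * ⟪L φn, φn⟫ + Rn^2 := by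
    rw [hμd2] at hμd_le; linarith
  set a := (1/2) * ⟪L φn, φn⟫ - (1/2) * ⟪L φn1, φn1⟫ + Rn ^ 2 with ha
  have ha0 : 0 ≤ a := by rw [ha]; nlinarith [sq_nonneg Rt, key]
  have hs2 : Real.sqrt a ^ 2 = a := Real.sq_sqrt ha0
  set m := min (Real.sqrt a) (Real.sqrt E1') with hm
  have hm0 : 0 ≤ m := le_min (Real.sqrt_nonneg a) (Real.sqrt_nonneg E1')
  have h1' : m ^ 2 ≤ a := by
    calc m ^ 2 ≤ Real.sqrt a ^ 2 := by
          exact pow_le_pow_left₀ hm0 (min_le_left _ _) 2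
      _ = a := hs2
  have h2' : m ^ 2 ≤ E1' := by
    calc m ^ 2 ≤ Real.sqrt E1' ^ 2 := pow_le_pow_left₀ hm0 (min_le_right _ _) 2
      _ = E1' := Real.sq_sqrt hE1'.le
  refine ⟨?_, h2'⟩
  rw [ha] at h1'
  linarith
end

section
/- Energy stability of the relaxed SAV/CN scheme: Assume Δt > 0, elements φⁿ, φⁿ⁺¹, μ, w of H, reals Rⁿ, R̃ⁿ⁺¹, ℰ₁ > 0 satisfy (i) (φⁿ⁺¹ − φⁿ)/Δt = −G μ, (ii) μ = (1/2)·L φⁿ⁺¹ + (1/2)·L φⁿ + ((R̃ⁿ⁺¹ + Rⁿ)/(2·√ℰ₁))·w, (iii) (R̃ⁿ⁺¹ − Rⁿ)/Δt = (1/(2·√ℰ₁))·⟨w, (φⁿ⁺¹ − φⁿ)/Δt⟩, and let η ∈ [0, 1] and Rⁿ⁺¹ be a real number with (Rⁿ⁺¹)² − (R̃ⁿ⁺¹)² ≤ Δt·η·⟨G μ, μ⟩. Then (1/2)⟨L φⁿ⁺¹, φⁿ⁺¹⟩ + (Rⁿ⁺¹)² − (1/2)⟨L φⁿ, φⁿ⟩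 − (Rⁿ)² ≤ −(1 − η)·Δt·⟨G μ, μ⟩ ≤ 0. -/
open RealInnerProductSpace

/-- Energy stability of the relaxed SAV/CN scheme. -/
theorem rsav_cn_energy_stability
    {H : Type*} [NormedAddCommGroup H] [InnerProductSpace ℝ H]
    (L G : H →L[ℝ] H)
    (hLsym : ∀ u v : H, ⟪L u, v⟫ = ⟪u, L v⟫)
    (hLpos : ∀ v : H, 0 ≤ ⟪L v, v⟫)
    (hGpos : ∀ v : H, 0 ≤ ⟪G v, v⟫)
    (dt : ℝ) (hdt : 0 < dt)
    (φn φn1 μ w : H) (Rn Rt E1 : ℝ) (hE1 : 0 < E1)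
    (h1 : dt⁻¹ • (φn1 - φn) = -(G μ))
    (h2 : μ = (1/2 : ℝ) • L φn1 + (1/2 : ℝ) • L φn
          + ((Rt + Rn) / (2 * Real.sqrt E1)) • w)
    (h3 : (Rt - Rn) / dt = (1 / (2 * Real.sqrt E1)) * ⟪w, dt⁻¹ • (φn1 - φn)⟫)
    (η : ℝ) (hη : η ∈ Set.Icc (0:ℝ) 1)
    (Rn1 : ℝ) (hrelax : Rn1 ^ 2 - Rt ^ 2 ≤ dt * η * ⟪G μ, μ⟫) :
    (1/2) * ⟪L φn1, φn1⟫ + Rn1 ^ 2 - (1/2) * ⟪L φn, φn⟫ - Rn ^ 2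
      ≤ -(1 - η) * dt * ⟪G μ, μ⟫ ∧
    -(1 - η) * dt * ⟪G μ, μ⟫ ≤ 0 := by
  obtain ⟨hη0, hη1⟩ := hη
  have hs : Real.sqrt E1 ≠ 0 := ne_of_gt (Real.sqrt_pos.mpr hE1)
  have hd : φn1 - φn = (-dt) • G μ := by
    have := congrArg (fun x => dt • x) h1
    simpa [smul_smul, mul_inv_cancel₀ hdt.ne', neg_smul, smul_neg] using this
  have hw : Rt - Rn = (1 / (2 * Real.sqrt E1)) * ⟪w, φn1 - φn⟫ := by
    have h3' := h3
    rw [real_inner_smul_right] at h3'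
    field_simp at h3' ⊢
    have h4 : (Rt - Rn) * (2 * Real.sqrt E1) = ⟪w, φn1 - φn⟫ :=
      mul_right_cancel₀ hdt.ne' (by linear_combination dt * h3')
    linarith [h4]
  have hsym : ⟪L φn1, φn⟫ = ⟪L φn, φn1⟫ := by
    rw [hLsym, real_inner_comm]
  have key : ⟪μ, φn1 - φn⟫
      = (1/2) * ⟪L φn1, φn1⟫ - (1/2) * ⟪L φn, φn⟫ + (Rt^2 - Rn^2) := by
    have hRR : (Rt + Rn) / (2 * Real.sqrt E1) * ⟪w, φn1 - φn⟫ = Rt^2 - Rn^2 := by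
      have : Rt^2 - Rn^2 = (Rt + Rn) * (Rt - Rn) := by ring
      rw [this, hw]; ring
    calc ⟪μ, φn1 - φn⟫
        = (1/2) * ⟪L φn1, φn1⟫ - (1/2) * ⟪L φn1, φn⟫
          + ((1/2) * ⟪L φn, φn1⟫ - (1/2) * ⟪L φn, φn⟫)
          + (Rt + Rn) / (2 * Real.sqrt E1) * ⟪w, φn1 - φn⟫ := by
          rw [h2]
          simp [inner_add_left, real_inner_smul_left, inner_sub_right]
          ring
      _ = (1/2) * ⟪L φn1, φn1⟫ - (1/2) * ⟪L φn, φn⟫ + (Rt^2 - Rn^2) := by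
          rw [hRR, hsym]; ring
  have hGmu : ⟪μ, φn1 - φn⟫ = -dt * ⟪G μ, μ⟫ := by
    rw [hd, real_inner_smul_right, real_inner_comm]
  have hE : (1/2) * ⟪L φn1, φn1⟫ - (1/2) * ⟪L φn, φn⟫ + (Rt^2 - Rn^2)
      = -dt * ⟪G μ, μ⟫ := by rw [← key, hGmu]
  constructor
  · nlinarith [hE, hrelax]
  · have h5 := hGpos μ
    have h6 : 0 ≤ (1 - η) * dt * ⟪G μ, μ⟫ :=
      mul_nonneg (mul_nonneg (by linarith) hdt.le) h5
    linarith
end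

section
/- Unconditional energy stability of the first-order SAV scheme (k = 1 case of scheme (2.2)): Assume Δt > 0, elements φⁿ, φⁿ⁺¹, μ, w of H, reals Rⁿ, Rⁿ⁺¹ and ℰ₁ > 0 satisfy (i) (φⁿ⁺¹ − φⁿ)/Δt = −G μ, (ii) μ = L φⁿ⁺¹ + (Rⁿ⁺¹/√ℰ₁)·w, (iii) (Rⁿ⁺¹ − Rⁿ)/Δt = (1/(2·√ℰ₁))·⟨w, (φⁿ⁺¹ − φⁿ)/Δt⟩. Then (1/2)⟨L φⁿ⁺¹, φⁿ⁺¹⟩ + (Rⁿ⁺¹)² − (1/2)⟨L φⁿ, φⁿ⟩ − (Rⁿ)² = −Δt·⟨G μ, μ⟩ − (1/2)⟨L(φⁿ⁺¹ − φⁿ), φⁿ⁺¹ − φⁿ⟩ − (Rⁿ⁺¹ − Rⁿ)² ≤ 0; in particular the modified energy ℰⁿ = (1/2)⟨Lφⁿ, φⁿ⟩ + (Rⁿ)² is non-increasing. -/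
open RealInnerProductSpace

/-- Unconditional energy stability of the first-order SAV scheme
(k = 1 case of scheme (2.2)). -/
theorem sav_bdf1_unconditional_stability
    {H : Type*} [NormedAddCommGroup H] [InnerProductSpace ℝ H]
    (L G : H →L[ℝ] H)
    (hLsym : ∀ u v : H, ⟪L u, v⟫ = ⟪u, L v⟫)
    (hLpos : ∀ v : H, 0 ≤ ⟪L v, v⟫)
    (hGpos : ∀ v : H, 0 ≤ ⟪G v, v⟫)
    (dt : ℝ) (hdt : 0 < dt)
    (φn φn1 μ w : H) (Rn Rn1 E1 : ℝ) (hE1 : 0 < E1)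
    (h1 : dt⁻¹ • (φn1 - φn) = -(G μ))
    (h2 : μ = L φn1 + (Rn1 / Real.sqrt E1) • w)
    (h3 : (Rn1 - Rn) / dt = (1 / (2 * Real.sqrt E1)) * ⟪w, dt⁻¹ • (φn1 - φn)⟫) :
    (1/2) * ⟪L φn1, φn1⟫ + Rn1 ^ 2 - (1/2) * ⟪L φn, φn⟫ - Rn ^ 2
      = -dt * ⟪G μ, μ⟫ - (1/2) * ⟪L (φn1 - φn), φn1 - φn⟫ - (Rn1 - Rn) ^ 2 ∧
    -dt * ⟪G μ, μ⟫ - (1/2) * ⟪L (φn1 - φn), φn1 - φn⟫ - (Rn1 - Rn) ^ 2 ≤ 0 := by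
  have hdt' : dt ≠ 0 := hdt.ne'
  have hsE : Real.sqrt E1 ≠ 0 := (Real.sqrt_pos.mpr hE1).ne'
  -- difference as step of the scheme
  have hd : φn1 - φn = -(dt • G μ) := by
    have := congrArg (dt • ·) h1
    simpa [smul_smul, mul_inv_cancel₀ hdt', smul_neg] using this
  -- inner product of μ with the difference
  have hμd : ⟪μ, φn1 - φn⟫ = -dt * ⟪G μ, μ⟫ := by
    rw [hd, inner_neg_right, real_inner_smul_right, real_inner_comm]
    ring
  -- expansion of ⟪L φn1, d⟫
  have hL : ⟪L φn1, φn1 - φn⟫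
      = 1/2 * ⟪L φn1, φn1⟫ - 1/2 * ⟪L φn, φn⟫
        + 1/2 * ⟪L (φn1 - φn), φn1 - φn⟫ := by
    have hcross : ⟪L φn1, φn⟫ = ⟪L φn, φn1⟫ := by
      rw [hLsym, real_inner_comm]
    simp only [map_sub, inner_sub_left, inner_sub_right, hcross]
    ring
  -- R relation
  have hR : Rn1 - Rn = (1 / (2 * Real.sqrt E1)) * ⟪w, φn1 - φn⟫ := by
    have hself : Rn1 - Rn = ((Rn1 - Rn) / dt) * dt := by field_simp
    rw [h3, real_inner_smul_right] at hself
    rw [hself]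
    field_simp
  -- testing h2 with the difference
  have hsplit : ⟪μ, φn1 - φn⟫
      = ⟪L φn1, φn1 - φn⟫ + (Rn1 / Real.sqrt E1) * ⟪w, φn1 - φn⟫ := by
    rw [h2, inner_add_left, real_inner_smul_left]
  -- relate the R term
  have hRterm : (Rn1 / Real.sqrt E1) * ⟪w, φn1 - φn⟫ = 2 * Rn1 * (Rn1 - Rn) := by
    rw [hR]
    field_simp
  have key : (1/2) * ⟪L φn1, φn1⟫ + Rn1 ^ 2 - (1/2) * ⟪L φn, φn⟫ - Rn ^ 2
      = -dt * ⟪G μ, μ⟫ - (1/2) * ⟪L (φn1 - φn), φn1 - φn⟫ - (Rn1 - Rn) ^ 2 := by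
    have := hsplit
    rw [hμd, hL, hRterm] at this
    nlinarith [this]
  refine ⟨key, ?_⟩
  have h1' := hLpos (φn1 - φn)
  have h2' := hGpos μ
  nlinarith [sq_nonneg (Rn1 - Rn), hdt.le, mul_nonneg hdt.le h2']
end

section
/- Unconditional energy stability of the second-order BDF2 SAV scheme (k = 2 case of scheme (2.2)): Assume Δt > 0, elements φⁿ⁻¹, φⁿ, φⁿ⁺¹, μ, w of H, reals Rⁿ⁻¹, Rⁿ, Rⁿ⁺¹ and ℰ₁ > 0 satisfy (i) ((3/2)φⁿ⁺¹ − 2φⁿ + (1/2)φⁿ⁻¹)/Δt = −G μ, (ii) μ = L φⁿ⁺¹ + (Rⁿ⁺¹/√ℰ₁)·w, (iii) ((3/2)Rⁿ⁺¹ − 2Rⁿ + (1/2)Rⁿ⁻¹)/Δt = (1/(2·√ℰ₁))·⟨w, ((3/2)φⁿ⁺¹ − 2φⁿ + (1/2)φⁿ⁻¹)/Δt⟩. Define the modified energy ℰⁿ := (1/4)[⟨Lφⁿ, φⁿ⟩ + ⟨L(2φⁿ − φⁿ⁻¹), 2φⁿ − φⁿ⁻¹⟩] + (1/2)[(Rⁿ)²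 + (2Rⁿ − Rⁿ⁻¹)²]. Then ℰⁿ⁺¹ − ℰⁿ = −Δt·⟨G μ, μ⟩ − (1/4)⟨L(φⁿ⁺¹ − 2φⁿ + φⁿ⁻¹), φⁿ⁺¹ − 2φⁿ + φⁿ⁻¹⟩ − (1/2)(Rⁿ⁺¹ − 2Rⁿ + Rⁿ⁻¹)² ≤ 0. -/
open RealInnerProductSpace

lemma bdf2_telescope {H : Type*} [NormedAddCommGroup H] [InnerProductSpace ℝ H]
    (L : H →L[ℝ] H) (hLsym : ∀ u v : H, ⟪L u, v⟫ = ⟪u, L v⟫) (a b c : H) :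
    (1/4) * (⟪L a, a⟫ + ⟪L ((2:ℝ) • a - b), (2:ℝ) • a - b⟫)
      - (1/4) * (⟪L b, b⟫ + ⟪L ((2:ℝ) • b - c), (2:ℝ) • b - c⟫)
    = ⟪L ((3/2:ℝ) • a - (2:ℝ) • b + (1/2:ℝ) • c), a⟫
      - (1/4) * ⟪L (a - (2:ℝ) • b + c), a - (2:ℝ) • b + c⟫ := by
  have hab : ⟪L a, b⟫ = ⟪L b, a⟫ := (hLsym a b).trans (real_inner_comm _ _)
  have hac : ⟪L a, c⟫ = ⟪L c, a⟫ := (hLsym a c).trans (real_inner_comm _ _)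
  have hbc : ⟪L b, c⟫ = ⟪L c, b⟫ := (hLsym b c).trans (real_inner_comm _ _)
  simp only [map_sub, map_add, map_smul, inner_sub_left, inner_add_left,
    inner_smul_left, inner_sub_right, inner_add_right, inner_smul_right,
    RCLike.star_def, conj_trivial]
  linear_combination (-1 : ℝ) * hab + (1/4 : ℝ) * hac

/-- Unconditional energy stability of the second-order BDF2 SAV scheme
(k = 2 case of scheme (2.2)). -/
theorem sav_bdf2_unconditional_stability
    {H : Type*} [NormedAddCommGroup H] [InnerProductSpace ℝ H]
    (L G : H →L[ℝ] H)
    (hLsym : ∀ u v : H, ⟪L u, v⟫ = ⟪u, L v⟫)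
    (hLpos : ∀ v : H, 0 ≤ ⟪L v, v⟫)
    (hGpos : ∀ v : H, 0 ≤ ⟪G v, v⟫)
    (dt : ℝ) (hdt : 0 < dt)
    (φnm1 φn φn1 μ w : H) (Rnm1 Rn Rn1 E1 : ℝ) (hE1 : 0 < E1)
    (h1 : dt⁻¹ • ((3/2 : ℝ) • φn1 - (2 : ℝ) • φn + (1/2 : ℝ) • φnm1) = -(G μ))
    (h2 : μ = L φn1 + (Rn1 / Real.sqrt E1) • w)
    (h3 : ((3/2) * Rn1 - 2 * Rn + (1/2) * Rnm1) / dt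
        = (1 / (2 * Real.sqrt E1))
          * ⟪w, dt⁻¹ • ((3/2 : ℝ) • φn1 - (2 : ℝ) • φn + (1/2 : ℝ) • φnm1)⟫) :
    ((1/4) * (⟪L φn1, φn1⟫ + ⟪L ((2:ℝ) • φn1 - φn), (2:ℝ) • φn1 - φn⟫)
        + (1/2) * (Rn1 ^ 2 + (2 * Rn1 - Rn) ^ 2))
      - ((1/4) * (⟪L φn, φn⟫ + ⟪L ((2:ℝ) • φn - φnm1), (2:ℝ) • φn - φnm1⟫)
        + (1/2) * (Rn ^ 2 + (2 * Rn - Rnm1) ^ 2))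
      = -dt * ⟪G μ, μ⟫
        - (1/4) * ⟪L (φn1 - (2:ℝ) • φn + φnm1), φn1 - (2:ℝ) • φn + φnm1⟫
        - (1/2) * (Rn1 - 2 * Rn + Rnm1) ^ 2 ∧
    -dt * ⟪G μ, μ⟫
        - (1/4) * ⟪L (φn1 - (2:ℝ) • φn + φnm1), φn1 - (2:ℝ) • φn + φnm1⟫
        - (1/2) * (Rn1 - 2 * Rn + Rnm1) ^ 2 ≤ 0 := by
  set δ := (3/2 : ℝ) • φn1 - (2 : ℝ) • φn + (1/2 : ℝ) • φnm1 with hδdef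
  set s := Real.sqrt E1 with hs
  have hs0 : s ≠ 0 := ne_of_gt (Real.sqrt_pos.mpr hE1)
  have hdt0 : dt ≠ 0 := ne_of_gt hdt
  -- δ = -dt • G μ
  have hδ : δ = (-dt) • G μ := by
    have := congrArg (fun x => dt • x) h1
    simpa [smul_smul, mul_inv_cancel₀ hdt0, neg_smul] using this
  -- ρ := (3/2)Rn1 - 2Rn + (1/2)Rnm1 satisfies 2 ρ = (1/s) ⟪w, δ⟫
  have hρ : (3/2) * Rn1 - 2 * Rn + (1/2) * Rnm1 = (1 / (2 * s)) * ⟪w, δ⟫ := by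
    calc (3/2) * Rn1 - 2 * Rn + (1/2) * Rnm1
        = (((3/2) * Rn1 - 2 * Rn + (1/2) * Rnm1) / dt) * dt := by field_simp
      _ = ((1 / (2 * s)) * (dt⁻¹ * ⟪w, δ⟫)) * dt := by rw [h3, real_inner_smul_right]
      _ = (1 / (2 * s)) * ⟪w, δ⟫ := by field_simp
  -- inner product energy rate
  have hkey : ⟪L δ, φn1⟫ + 2 * ((3/2) * Rn1 - 2 * Rn + (1/2) * Rnm1) * Rn1
      = -dt * ⟪G μ, μ⟫ := by
    have h4 : ⟪δ, μ⟫ = -dt * ⟪G μ, μ⟫ := by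
      nth_rewrite 1 [hδ]
      rw [real_inner_smul_left]
    have h5 : ⟪δ, μ⟫ = ⟪δ, L φn1⟫ + (Rn1 / s) * ⟪w, δ⟫ := by
      rw [h2, inner_add_right, real_inner_smul_right, real_inner_comm δ w]
    have hsym : ⟪L δ, φn1⟫ = ⟪δ, L φn1⟫ := hLsym δ φn1
    rw [hsym, hρ]
    rw [h5] at h4
    field_simp at h4 ⊢
    linarith [h4]
  have htel := bdf2_telescope L hLsym φn1 φn φnm1
  constructor
  · have : (1/2) * (Rn1 ^ 2 + (2 * Rn1 - Rn) ^ 2)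
        - (1/2) * (Rn ^ 2 + (2 * Rn - Rnm1) ^ 2)
        = 2 * ((3/2) * Rn1 - 2 * Rn + (1/2) * Rnm1) * Rn1
          - (1/2) * (Rn1 - 2 * Rn + Rnm1) ^ 2 := by ring
    rw [← hδdef] at htel
    linarith [htel, this, hkey]
  · have t1 : 0 ≤ dt * ⟪G μ, μ⟫ := mul_nonneg hdt.le (hGpos μ)
    have t2 := hLpos (φn1 - (2:ℝ) • φn + φnm1)
    have t3 := sq_nonneg (Rn1 - 2 * Rn + Rnm1)
    linarith
end
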